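/- arXiv:1503.06251 — 4 statements merged into one kernel-verified Lean document; each statement's English description precedes it below -/
import Mathlib

section
/- The map ψ combining two quasi-tilings, defined by [ψ(T,S)](g) = T(g) if T(g) ≠ ∅, = S(g) if S(g) ≠ ∅ and gS(g) is disjoint from all tile-translates of T, and = ∅ otherwise, is continuous and commutes with the shift action of G. -/
open Pointwise

/-- Disjoint quasi-tilings for a tile set. -/
def IsQT {G : Type*} [Group G] (𝒯 : Finset (Finset G)) (T : G → Finset G) : Prop :=
  (∀ g, T g ∈ 𝒯 ∨ T g = ∅) ∧
  ∀ g h : G, g ≠ h → Disjoint (g • ((T g : Finset G) : Set G)) (h • ((T h : Finset G) : Set G))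

open Classical in
/-- The combination map `ψ`: keep all tiles of `T`, and add each tile of `S` whose
translate is disjoint from all tile-translates of `T`. -/
noncomputable def psi {G : Type*} [Group G] (T S : G → Finset G) : G → Finset G :=
  fun g =>
    if T g ≠ ∅ then T g
    else if S g ≠ ∅ ∧ Disjoint (g • ((S g : Finset G) : Set G))
        (⋃ h, h • ((T h : Finset G) : Set G)) then S g
    else ∅

lemma psi_disj_mono {G : Type*} [Group G] [DecidableEq G] (𝒯 : Finset (Finset G))
    (T T' : G → Finset G) (Sg : Finset G) (g : G)
    (hT' : ∀ h, T' h ∈ 𝒯 ∨ T' h = ∅)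
    (hF : ∀ h ∈ ((g • Sg) * (𝒯.sup id)⁻¹ : Finset G), T' h = T h)
    (hd : Disjoint (g • ((Sg : Finset G) : Set G)) (⋃ h, h • ((T h : Finset G) : Set G))) :
    Disjoint (g • ((Sg : Finset G) : Set G)) (⋃ h, h • ((T' h : Finset G) : Set G)) := by
  rw [Set.disjoint_iUnion_right] at hd ⊢
  intro h
  by_cases hh : h ∈ ((g • Sg) * (𝒯.sup id)⁻¹ : Finset G)
  · rw [hF h hh]; exact hd h
  · rw [Set.disjoint_left]
    intro x hx hx'
    obtain ⟨t, ht, rfl⟩ := hx'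
    apply hh
    have hne : T' h ≠ ∅ := by
      intro e; rw [e] at ht; simp at ht
    have hmem : T' h ∈ 𝒯 := (hT' h).resolve_right hne
    have htA : t ∈ 𝒯.sup id := Finset.le_sup (f := id) hmem ht
    have hx2 : h • t ∈ (g • Sg : Finset G) := by
      rw [← Finset.mem_coe, Finset.coe_smul_finset]; exact hx
    have : (h • t) * t⁻¹ ∈ ((g • Sg) * (𝒯.sup id)⁻¹ : Finset G) :=
      Finset.mul_mem_mul hx2 (Finset.inv_mem_inv htA)
    simpa [smul_eq_mul, mul_assoc] using this

lemma psi_local {G : Type*} [Group G] [DecidableEq G] (𝒯 : Finset (Finset G))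
    (T T' S S' : G → Finset G)
    (hT : ∀ h, T h ∈ 𝒯 ∨ T h = ∅) (hT' : ∀ h, T' h ∈ 𝒯 ∨ T' h = ∅) (g : G)
    (hSg : S' g = S g) (hTg : T' g = T g)
    (hF : ∀ h ∈ ((g • S g) * (𝒯.sup id)⁻¹ : Finset G), T' h = T h) :
    psi T' S' g = psi T S g := by
  have hiff : Disjoint (g • ((S g : Finset G) : Set G)) (⋃ h, h • ((T' h : Finset G) : Set G)) ↔
      Disjoint (g • ((S g : Finset G) : Set G)) (⋃ h, h • ((T h : Finset G) : Set G)) := by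
    constructor
    · exact psi_disj_mono 𝒯 T' T (S g) g hT (fun h hh => (hF h hh).symm)
    · exact psi_disj_mono 𝒯 T T' (S g) g hT' hF
  unfold psi
  rw [hTg, hSg, hiff]

/-- `ψ` is continuous (on the spaces of disjoint `𝒯`- and
`𝒮`-quasi-tilings, with product-of-discrete topologies) and commutes with the shift. -/
theorem stmt_10 {G : Type*} [Group G]
    (𝒯 𝒮 : Finset (Finset G)) (h𝒯 : ∀ t ∈ 𝒯, (1 : G) ∈ t) (h𝒮 : ∀ t ∈ 𝒮, (1 : G) ∈ t) :
    (@ContinuousOn ((G → Finset G) × (G → Finset G)) (G → Finset G)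
      (@instTopologicalSpaceProd _ _
        (@Pi.topologicalSpace G (fun _ => Finset G) (fun _ => ⊥))
        (@Pi.topologicalSpace G (fun _ => Finset G) (fun _ => ⊥)))
      (@Pi.topologicalSpace G (fun _ => Finset G) (fun _ => ⊥))
      (fun p => psi p.1 p.2)
      ({T | IsQT 𝒯 T} ×ˢ {S | IsQT 𝒮 S})) ∧
    ∀ (g : G) (T S : G → Finset G),
      psi (fun h => T (g⁻¹ * h)) (fun h => S (g⁻¹ * h)) = fun h => psi T S (g⁻¹ * h) := by
  letI : TopologicalSpace (Finset G) := ⊥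
  haveI : DiscreteTopology (Finset G) := ⟨rfl⟩
  letI : DecidableEq G := Classical.decEq G
  constructor
  · intro p hp
    rw [continuousWithinAt_pi]
    intro g
    rw [ContinuousWithinAt, nhds_discrete, Filter.tendsto_pure]
    set F : Finset G := insert g ((g • p.2 g) * (𝒯.sup id)⁻¹) with hFdef
    have hT1 : ∀ h ∈ F, ∀ᶠ q in nhdsWithin p ({T | IsQT 𝒯 T} ×ˢ {S | IsQT 𝒮 S}),
        q.1 h = p.1 h := by
      intro h _
      apply Filter.Eventually.filter_mono nhdsWithin_le_nhds
      exact ((((continuous_apply (A := fun _ : G => Finset G) h)).comp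
        (continuous_fst (X := G → Finset G) (Y := G → Finset G))).isOpen_preimage
        ({p.1 h} : Set (Finset G)) (isOpen_discrete _)).mem_nhds (Set.mem_singleton _)
    have hT : ∀ᶠ q in nhdsWithin p ({T | IsQT 𝒯 T} ×ˢ {S | IsQT 𝒮 S}),
        ∀ h ∈ F, q.1 h = p.1 h := (F.eventually_all).2 hT1
    have hS : ∀ᶠ q in nhdsWithin p ({T | IsQT 𝒯 T} ×ˢ {S | IsQT 𝒮 S}), q.2 g = p.2 g := by
      apply Filter.Eventually.filter_mono nhdsWithin_le_nhds
      exact ((((continuous_apply (A := fun _ : G => Finset G) g)).comp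
        (continuous_snd (X := G → Finset G) (Y := G → Finset G))).isOpen_preimage
        ({p.2 g} : Set (Finset G)) (isOpen_discrete _)).mem_nhds (Set.mem_singleton _)
    have hmem : ∀ᶠ q in nhdsWithin p ({T | IsQT 𝒯 T} ×ˢ {S | IsQT 𝒮 S}),
        q ∈ ({T | IsQT 𝒯 T} ×ˢ {S | IsQT 𝒮 S} : Set _) := eventually_mem_nhdsWithin
    filter_upwards [hT, hS, hmem] with q hq1 hq2 hq3
    exact psi_local 𝒯 p.1 q.1 p.2 q.2 hp.1.1 hq3.1.1 g hq2
      (hq1 g (Finset.mem_insert_self _ _))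
      (fun h hh => hq1 h (Finset.mem_insert_of_mem hh))
  · intro g T S
    funext h
    have hU : (⋃ k, k • ((T (g⁻¹ * k) : Finset G) : Set G)) =
        g • ⋃ k, k • ((T k : Finset G) : Set G) := by
      rw [Set.smul_set_iUnion]
      ext x
      simp only [Set.mem_iUnion]
      constructor
      · rintro ⟨k, hk⟩
        exact ⟨g⁻¹ * k, by rwa [smul_smul, mul_inv_cancel_left]⟩
      · rintro ⟨k, hk⟩
        refine ⟨g * k, ?_⟩
        rw [inv_mul_cancel_left]
        rwa [smul_smul] at hk
    have hD : ∀ s : Set G, Disjoint (h • s) (⋃ k, k • ((T (g⁻¹ * k) : Finset G) : Set G)) ↔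
        Disjoint ((g⁻¹ * h) • s) (⋃ k, k • ((T k : Finset G) : Set G)) := by
      intro s
      rw [hU]
      have h1 : h • s = g • ((g⁻¹ * h) • s) := by rw [smul_smul, mul_inv_cancel_left]
      rw [h1, Set.disjoint_smul_set]
    simp only [psi]
    rw [hD]
end

section
/- If X ⊆ A^G is a shift (closed shift-invariant set) such that for some δ > 0 and every finite (1,δ)-invariant F ⊆ G, every x ∈ X vanishes on all but at most ε|F| elements of F, then the topological entropy of X satisfies h(X) ≤ ε·log(3|A|/ε). -/
open Pointwise Filter

/-- Projections of `X ⊆ A^G` to a finite set. -/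
def proj {G A : Type*} (X : Set (G → A)) (K : Finset G) : Set (K → A) :=
  {f | ∃ x ∈ X, ∀ k : K, f k = x k}

/-- The word-metric ball of radius `r` for the generating set `gen`. -/
def ball {G : Type*} [Group G] [DecidableEq G] (gen : Finset G) (r : ℕ) : Finset G :=
  (insert (1 : G) (gen ∪ gen⁻¹)) ^ r

/-- The `r`-boundary of a set `F ⊆ G`. -/
def bdry {G : Type*} [Group G] [DecidableEq G] (gen : Finset G) (r : ℕ) (F : Set G) : Set G :=
  {g | (∃ b ∈ ball gen r, g * b ∈ F) ∧ (∃ b ∈ ball gen r, g * b ∉ F)}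

/-- The `r`-boundary ratio `ρ_r(F) = |∂_r F| / |F|`. -/
noncomputable def rho {G : Type*} [Group G] [DecidableEq G]
    (gen : Finset G) (r : ℕ) (F : Finset G) : ℝ :=
  ((bdry gen r (F : Set G)).ncard : ℝ) / F.card


open Finset in
/-- Weighted counting: a family of functions with support size ≤ m is small. -/
lemma count_bd {I A : Type*} [Fintype I] [Fintype A] [DecidableEq A] (z : A)
    (t m : ℝ) (ht0 : 0 < t) (ht1 : t ≤ 1)
    (S : Finset (I → A))
    (hS : ∀ f ∈ S, ((Finset.univ.filter (fun i => f i ≠ z)).card : ℝ) ≤ m) :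
    (S.card : ℝ) ≤ t ^ (-m) * (1 + ((Fintype.card A : ℝ) - 1) * t) ^ (Fintype.card I) := by
  classical
  have hw : ∀ f : I → A, (∏ i : I, (if f i = z then (1:ℝ) else t))
      = t ^ ((Finset.univ.filter (fun i => f i ≠ z)).card) := by
    intro f
    rw [Finset.prod_ite]
    simp [Finset.prod_const]
  have hsum : ∑ f : I → A, t ^ ((Finset.univ.filter (fun i => f i ≠ z)).card : ℕ)
      = (1 + ((Fintype.card A : ℝ) - 1) * t) ^ (Fintype.card I) := by
    have := Finset.prod_univ_sum (fun _ : I => (Finset.univ : Finset A))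
      (fun _ a => if a = z then (1:ℝ) else t)
    rw [Fintype.piFinset_univ] at this
    have hs : ∑ a : A, (if a = z then (1:ℝ) else t)
        = 1 + ((Fintype.card A : ℝ) - 1) * t := by
      rw [Finset.sum_ite]
      have h1 : Finset.univ.filter (fun a : A => a = z) = {z} := by
        ext a; simp
      have h2 : Finset.univ.filter (fun a : A => ¬ a = z) = Finset.univ.erase z := by
        rw [← Finset.filter_ne']
      have hcA : 1 ≤ Fintype.card A := Fintype.card_pos_iff.mpr ⟨z⟩
      rw [h1, h2]
      simp [Finset.card_erase_of_mem, Nat.cast_sub hcA]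
    calc ∑ f : I → A, t ^ ((Finset.univ.filter (fun i => f i ≠ z)).card : ℕ)
        = ∑ f : I → A, ∏ i : I, (if f i = z then (1:ℝ) else t) := by
          refine Finset.sum_congr rfl fun f _ => (hw f).symm
      _ = ∏ i : I, ∑ a : A, (if a = z then (1:ℝ) else t) := this.symm
      _ = (1 + ((Fintype.card A : ℝ) - 1) * t) ^ (Fintype.card I) := by
          rw [hs]; simp [Finset.prod_const]
  have key : (S.card : ℝ) ≤ t ^ (-m) * ∑ f : I → A,
      t ^ ((Finset.univ.filter (fun i => f i ≠ z)).card : ℕ) := by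
    rw [Finset.mul_sum]
    calc (S.card : ℝ) = ∑ _f ∈ S, (1:ℝ) := by simp
      _ ≤ ∑ f ∈ S, t ^ (-m) * t ^ ((Finset.univ.filter (fun i => f i ≠ z)).card : ℕ) := by
          refine Finset.sum_le_sum fun f hf => ?_
          have hk := hS f hf
          have : t ^ (-m) * t ^ ((Finset.univ.filter (fun i => f i ≠ z)).card : ℕ)
              = t ^ (((Finset.univ.filter (fun i => f i ≠ z)).card : ℝ) - m) := by
            rw [← Real.rpow_natCast t, ← Real.rpow_add ht0]
            ring_nf
          rw [this]
          exact Real.one_le_rpow_of_pos_of_le_one_of_nonpos ht0 ht1 (by linarith)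
      _ ≤ ∑ f : I → A, t ^ (-m) * t ^ ((Finset.univ.filter (fun i => f i ≠ z)).card : ℕ) := by
          refine Finset.sum_le_sum_of_subset_of_nonneg (Finset.subset_univ S) fun f _ _ => ?_
          positivity
  rw [hsum] at key
  exact key

/-- if for some `δ > 0`, on every `(1,δ)`-invariant finite `F` every
`x ∈ X` vanishes outside at most `ε|F|` points, then `h(X) ≤ ε log(3|A|/ε)`;
entropy is the Følner limit of `(1/|Fₙ|) log |X_{Fₙ}|`. -/
theorem stmt_11 {G A : Type*} [Group G] [DecidableEq G] [Fintype A]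
    (gen : Finset G) (hgen : Subgroup.closure (gen : Set G) = ⊤)
    (z : A) (X : Set (G → A))
    (hXclosed : @IsClosed (G → A) (@Pi.topologicalSpace G (fun _ => A) (fun _ => ⊥)) X)
    (hXinv : ∀ (g : G), ∀ x ∈ X, (fun h => x (g⁻¹ * h)) ∈ X)
    (ε : ℝ) (hε0 : 0 < ε) (hε1 : ε ≤ 1)
    (δ : ℝ) (hδ : 0 < δ)
    (hvanish : ∀ F : Finset G, F.Nonempty → rho gen 1 F ≤ δ →
      ∀ x ∈ X, (({g ∈ (F : Set G) | x g ≠ z}).ncard : ℝ) ≤ ε * F.card)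
    (Fn : ℕ → Finset G) (hFne : ∀ n, (Fn n).Nonempty)
    (hFol : Tendsto (fun n => rho gen 1 (Fn n)) atTop (nhds 0))
    (h : ℝ)
    (hlim : Tendsto (fun n => Real.log ((proj X (Fn n)).ncard) / (Fn n).card)
      atTop (nhds h)) :
    h ≤ ε * Real.log (3 * Fintype.card A / ε) := by
  classical
  set a : ℝ := (Fintype.card A : ℝ) with ha_def
  have ha1 : 1 ≤ a := by
    have h1 : 1 ≤ Fintype.card A := Fintype.card_pos_iff.mpr ⟨z⟩
    rw [ha_def]; exact_mod_cast h1
  have ha0 : 0 < a := by linarith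
  set t : ℝ := ε / a with ht_def
  have ht0 : 0 < t := div_pos hε0 ha0
  have ht1 : t ≤ 1 := by
    rw [div_le_one ha0]; linarith
  have hlog3 : 1 ≤ Real.log 3 := by
    rw [Real.le_log_iff_exp_le (by norm_num)]
    have := Real.exp_one_lt_d9
    linarith
  refine le_of_tendsto hlim ?_
  filter_upwards [hFol.eventually (gt_mem_nhds hδ)] with n hn
  set F := Fn n with hF_def
  have hN0 : 0 < (F.card : ℝ) := by exact_mod_cast (hFne n).card_pos
  rw [div_le_iff₀ hN0]
  set N : ℝ := (F.card : ℝ)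
  set m : ℝ := ε * N with hm_def
  have hv := hvanish F (hFne n) (le_of_lt hn)
  -- the finite set of projections
  have hfin : (proj X F).Finite := Set.toFinite _
  set S : Finset (↥F → A) := hfin.toFinset with hS_def
  have hcard : (proj X F).ncard = S.card := Set.ncard_eq_toFinset_card _ hfin
  have hS : ∀ f ∈ S, ((Finset.univ.filter (fun i : ↥F => f i ≠ z)).card : ℝ) ≤ m := by
    intro f hf
    rw [hS_def, Set.Finite.mem_toFinset] at hf
    obtain ⟨x, hx, hfx⟩ := hf
    have hce : (Finset.univ.filter (fun i : ↥F => f i ≠ z)).card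
        = (F.filter (fun g => x g ≠ z)).card := by
      refine Finset.card_bij (fun i _ => (i : G)) ?_ ?_ ?_
      · intro i hi
        simp only [Finset.mem_filter, Finset.mem_univ, true_and] at hi
        simp only [Finset.mem_filter]
        exact ⟨i.2, by rw [← hfx i]; exact hi⟩
      · intro i _ j _ hij
        exact Subtype.ext hij
      · intro g hg
        simp only [Finset.mem_filter] at hg
        refine ⟨⟨g, hg.1⟩, ?_, rfl⟩
        simp only [Finset.mem_filter, Finset.mem_univ, true_and]
        rw [hfx ⟨g, hg.1⟩]
        exact hg.2
    rw [hce]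
    have hset : {g ∈ (F : Set G) | x g ≠ z} = ((F.filter (fun g => x g ≠ z)) : Set G) := by
      ext g; simp [Finset.mem_filter]
    have := hv x hx
    rw [hset, Set.ncard_coe_finset] at this
    exact this
  have hkey : (S.card : ℝ) ≤ t ^ (-m) * (1 + (a - 1) * t) ^ F.card := by
    have := count_bd z t m ht0 ht1 S hS
    rwa [Fintype.card_coe] at this
  -- positivity of the bound
  have hB1 : (1:ℝ) ≤ 1 + (a - 1) * t := by nlinarith
  have hRpos : 0 < t ^ (-m) * (1 + (a - 1) * t) ^ F.card := by positivity
  have hlogle : Real.log ((proj X F).ncard)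
      ≤ Real.log (t ^ (-m) * (1 + (a - 1) * t) ^ F.card) := by
    rcases Nat.eq_zero_or_pos (proj X F).ncard with h0 | hpos
    · rw [h0]
      simpa using Real.log_nonneg (by
        calc (1:ℝ) ≤ 1 + (a-1)*t := hB1
          _ ≤ (1 + (a-1)*t) ^ F.card := le_self_pow₀ (by linarith) (hFne n).card_pos.ne'
          _ = 1 * ((1 + (a-1)*t) ^ F.card) := (one_mul _).symm
          _ ≤ t ^ (-m) * (1 + (a-1)*t) ^ F.card := by
              refine mul_le_mul_of_nonneg_right ?_ (by positivity)
              refine Real.one_le_rpow_of_pos_of_le_one_of_nonpos ht0 ht1 ?_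
              rw [hm_def]; nlinarith)
    · refine Real.log_le_log (by exact_mod_cast hpos) ?_
      rw [hcard]; exact_mod_cast hkey
  refine hlogle.trans ?_
  rw [Real.log_mul (by positivity) (by positivity), Real.log_rpow ht0, Real.log_pow]
  have hlogB : Real.log (1 + (a - 1) * t) ≤ ε := by
    have h1 : Real.log (1 + (a - 1) * t) ≤ (a - 1) * t :=
      by have := Real.log_le_sub_one_of_pos (show (0:ℝ) < 1 + (a-1)*t by linarith); linarith
    have h2 : (a - 1) * t ≤ ε := by
      rw [ht_def]
      rw [div_eq_mul_inv]
      have : (a - 1) * (ε * a⁻¹) = ε * ((a-1) * a⁻¹) := by ring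
      rw [this]
      have hle : (a - 1) * a⁻¹ ≤ 1 := by
        rw [← div_eq_mul_inv, div_le_one ha0]; linarith
      nlinarith
    linarith
  have hlogt : Real.log t = Real.log ε - Real.log a := Real.log_div hε0.ne' ha0.ne'
  have hRHS : Real.log (3 * a / ε) = Real.log 3 + Real.log a - Real.log ε := by
    rw [Real.log_div (by positivity) hε0.ne', Real.log_mul (by norm_num) ha0.ne']
  rw [hlogt, hRHS]
  have hNcast : (F.card : ℝ) = N := rfl
  rw [hNcast]
  have hεN : 0 ≤ ε * N := by positivity
  have : (N : ℝ) * Real.log (1 + (a-1)*t) ≤ N * ε :=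
    mul_le_mul_of_nonneg_left hlogB (le_of_lt hN0)
  rw [hm_def]
  nlinarith [mul_le_mul_of_nonneg_left hlog3 hεN]
end

section
/- If Q is a shift of 𝒯-quasi-tilings whose error density is at most ε/2 and 𝒯 is (r, ε/2)-invariant, then the r-exterior density of Q is at most ε. -/
open Pointwise Filter

/-- The union of all tile-translates of a quasi-tiling `T`. -/
def tiles {G : Type*} [Group G] (T : G → Finset G) : Set G :=
  ⋃ h, h • ((T h : Finset G) : Set G)

/-- The set of `T`-errors in `F`: elements of `F` covered by no tile-translate. -/
def errSet {G : Type*} [Group G] (T : G → Finset G) (F : Finset G) : Set G :=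
  {g ∈ (F : Set G) | g ∉ tiles T}

/-- The `r`-exterior of a quasi-tiling `T`: the complement of the union of the
tile-translates with their `r`-boundaries removed. -/
def rExterior {G : Type*} [Group G] [DecidableEq G]
    (gen : Finset G) (r : ℕ) (T : G → Finset G) : Set G :=
  (⋃ h, (h • ((T h : Finset G) : Set G) \ bdry gen r (h • ((T h : Finset G) : Set G))))ᶜ


section lemmas
variable {G : Type*} [Group G] [DecidableEq G] (gen : Finset G)

lemma one_mem_ball (r : ℕ) : (1:G) ∈ ball gen r :=
  Finset.one_mem_pow (Finset.mem_insert_self _ _)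

lemma ball_inv (r : ℕ) : (ball gen r)⁻¹ = ball gen r := by
  unfold ball
  rw [← inv_pow]
  congr 1
  ext x
  simp only [Finset.mem_inv', Finset.mem_insert, Finset.mem_union, Finset.mem_inv']
  constructor
  · rintro (h | h | h)
    · left; simpa using congrArg (·⁻¹) h
    · right; right; simpa using h
    · right; left; simpa using h
  · rintro (h | h | h)
    · left; simpa using congrArg (·⁻¹) h
    · right; right; simpa using h
    · right; left; simpa using h

lemma mem_ball_inv {r : ℕ} {b : G} (h : b ∈ ball gen r) : b⁻¹ ∈ ball gen r := by
  rw [← ball_inv gen r]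
  simpa using h

lemma mul_mem_ball {r s : ℕ} {a b : G} (ha : a ∈ ball gen r) (hb : b ∈ ball gen s) :
    a * b ∈ ball gen (r + s) := by
  unfold ball at *
  rw [pow_add]
  exact Finset.mul_mem_mul ha hb

lemma ball_mono {r s : ℕ} (h : r ≤ s) : ball gen r ⊆ ball gen s :=
  Finset.pow_subset_pow_right (Finset.mem_insert_self _ _) h

lemma exists_mem_ball (hgen : Subgroup.closure (gen : Set G) = ⊤) (g : G) :
    ∃ R, g ∈ ball gen R := by
  have hg : g ∈ Subgroup.closure (gen : Set G) := by rw [hgen]; trivial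
  induction hg using Subgroup.closure_induction with
  | mem x hx =>
      refine ⟨1, ?_⟩
      rw [ball, pow_one]
      exact Finset.mem_insert_of_mem (Finset.mem_union_left _ (Finset.mem_coe.mp hx))
  | one => exact ⟨0, one_mem_ball gen 0⟩
  | mul x y _ _ hx hy =>
      obtain ⟨R1, h1⟩ := hx; obtain ⟨R2, h2⟩ := hy
      exact ⟨R1 + R2, mul_mem_ball gen h1 h2⟩
  | inv x _ hx =>
      obtain ⟨R, h⟩ := hx
      exact ⟨R, mem_ball_inv gen h⟩

lemma finset_subset_ball (hgen : Subgroup.closure (gen : Set G) = ⊤) (C : Finset G) :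
    ∃ R, C ⊆ ball gen R := by
  induction C using Finset.induction_on with
  | empty => exact ⟨0, by simp⟩
  | @insert a s _ ih =>
      obtain ⟨R, hR⟩ := ih
      obtain ⟨R', hR'⟩ := exists_mem_ball gen hgen a
      refine ⟨max R R', Finset.insert_subset ?_ ?_⟩
      · exact ball_mono gen (le_max_right _ _) hR'
      · exact hR.trans (ball_mono gen (le_max_left _ _))

lemma bdry_smul (r : ℕ) (h : G) (A : Set G) :
    bdry gen r (h • A) = h • bdry gen r A := by
  ext g
  have e : ∀ x : G, x ∈ h • A ↔ h⁻¹ * x ∈ A := fun x => by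
    rw [Set.mem_smul_set_iff_inv_smul_mem, smul_eq_mul]
  rw [Set.mem_smul_set_iff_inv_smul_mem, smul_eq_mul]
  simp only [bdry, Set.mem_setOf_eq, e, mul_assoc]

lemma bdry_subset_mul (r : ℕ) (A : Set G) :
    bdry gen r A ⊆ (fun p => p.1 * p.2) '' (A ×ˢ (↑(ball gen r) : Set G)) := by
  rintro g ⟨⟨b, hb, hgb⟩, -⟩
  exact ⟨⟨g * b, b⁻¹⟩, ⟨hgb, mem_ball_inv gen hb⟩, by group⟩

lemma bdry_finite {A : Set G} (hA : A.Finite) (r : ℕ) : (bdry gen r A).Finite :=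
  Set.Finite.subset (Set.Finite.image _ (hA.prod (ball gen r).finite_toSet))
    (bdry_subset_mul gen r A)

/-- crossing lemma -/
lemma crossing {F : Set G} {g c : G} (hg : g ∈ F) {n : ℕ} (hc : c ∈ ball gen n)
    (hout : g * c ∉ F) : ∃ x ∈ bdry gen 1 F, ∃ b ∈ ball gen n, x = g * b := by
  induction n generalizing c with
  | zero =>
      have : c = 1 := by simpa [ball, pow_zero, Finset.mem_one] using hc
      exact absurd (by simpa [this] using hg) hout
  | succ n ih =>
      have : c ∈ (insert (1:G) (gen ∪ gen⁻¹)) ^ n * (insert (1:G) (gen ∪ gen⁻¹)) := by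
        simpa [ball, pow_succ] using hc
      rw [Finset.mem_mul] at this
      obtain ⟨c', hc', s, hs, rfl⟩ := this
      by_cases hmid : g * c' ∈ F
      · refine ⟨g * c', ⟨⟨1, one_mem_ball gen 1, by simpa using hmid⟩,
          ⟨s, ?_, by rw [mul_assoc]; exact hout⟩⟩, c', ball_mono gen (Nat.le_succ n) hc', rfl⟩
        simpa [ball, pow_one] using hs
      · obtain ⟨x, hx, b, hb, rfl⟩ := ih hc' hmid
        exact ⟨g * b, hx, b, ball_mono gen (Nat.le_succ n) hb, rfl⟩

lemma bdry_subset_bdry_one_mul (R : ℕ) (F : Set G) :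
    bdry gen R F ⊆ ⋃ x ∈ bdry gen 1 F, x • (↑(ball gen (3 * R)) : Set G) := by
  rintro g ⟨⟨b, hb, hgb⟩, ⟨b', hb', hgb'⟩⟩
  have hc : b⁻¹ * b' ∈ ball gen (R + R) := mul_mem_ball gen (mem_ball_inv gen hb) hb'
  have hout : g * b * (b⁻¹ * b') ∉ F := by
    have : g * b * (b⁻¹ * b') = g * b' := by group
    rwa [this]
  obtain ⟨x, hx, b2, hb2, rfl⟩ := crossing gen hgb hc hout
  refine Set.mem_biUnion hx ?_
  refine ⟨(b * b2)⁻¹, ?_, by simp only [smul_eq_mul]; group⟩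
  apply mem_ball_inv
  have : b * b2 ∈ ball gen (R + (R + R)) := mul_mem_ball gen hb hb2
  exact ball_mono gen (by omega) this

lemma ncard_bdry_le (R : ℕ) (F : Finset G) :
    (bdry gen R (↑F : Set G)).ncard ≤ (bdry gen 1 (↑F : Set G)).ncard * (ball gen (3 * R)).card := by
  classical
  have h1 : (bdry gen 1 (↑F : Set G)).Finite := bdry_finite gen F.finite_toSet 1
  set B1 : Finset G := h1.toFinset with hB1
  have hsub : bdry gen R (↑F : Set G) ⊆ ↑(B1 * ball gen (3 * R)) := by
    intro g hg
    obtain ⟨x, hx, hgx⟩ := Set.mem_iUnion₂.mp (bdry_subset_bdry_one_mul gen R (↑F) hg)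
    obtain ⟨b, hb, rfl⟩ := hgx
    exact Finset.mem_coe.mpr (Finset.mul_mem_mul (h1.mem_toFinset.mpr hx) hb)
  calc (bdry gen R (↑F : Set G)).ncard ≤ (B1 * ball gen (3 * R)).card := by
        rw [← Set.ncard_coe_finset]
        exact Set.ncard_le_ncard hsub (Finset.finite_toSet _)
    _ ≤ B1.card * (ball gen (3 * R)).card := Finset.card_mul_le
    _ = (bdry gen 1 (↑F : Set G)).ncard * (ball gen (3 * R)).card := by
        rw [hB1, ← Set.ncard_eq_toFinset_card _ h1]

lemma mul_ball_sdiff_subset_bdry (R : ℕ) (F : Finset G) :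
    (↑(F * ball gen R) : Set G) \ ↑F ⊆ bdry gen R (↑F : Set G) := by
  rintro g ⟨hg, hng⟩
  rw [Finset.mem_coe, Finset.mem_mul] at hg
  obtain ⟨f, hf, b, hb, rfl⟩ := hg
  refine ⟨⟨b⁻¹, mem_ball_inv gen hb, by simpa using hf⟩,
    ⟨1, one_mem_ball gen R, by simpa using hng⟩⟩

end lemmas

lemma final_arith {N E s1 s2 f dc ε : ℝ} (hN : N ≤ E + ε/2*(s1+s2)) (h1 : s1 + E ≤ f)
    (h2 : s2 ≤ dc * f) (hE : E ≤ ε/2*f) (hd1 : dc ≤ 1) (hd2 : dc ≤ ε/2) (hf : 0 < f)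
    (hε : 0 < ε) (hE0 : 0 ≤ E) (hs1 : 0 ≤ s1) (hs2 : 0 ≤ s2) : N ≤ ε*f := by
  have hdcf1 : dc * f ≤ 1 * f := mul_le_mul_of_nonneg_right hd1 hf.le
  have hdcf2 : dc * f ≤ ε/2 * f := mul_le_mul_of_nonneg_right hd2 hf.le
  rcases le_or_gt ε 2 with hcase | hcase
  · have hA : ε/2 * s1 ≤ ε/2 * (f - E) :=
      mul_le_mul_of_nonneg_left (by linarith) (by linarith)
    have hB : ε/2 * s2 ≤ ε/2 * (ε/2 * f) :=
      mul_le_mul_of_nonneg_left (by linarith) (by linarith)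
    have hC : E * (1 - ε/2) ≤ ε/2 * f * (1 - ε/2) :=
      mul_le_mul_of_nonneg_right hE (by linarith)
    nlinarith [hA, hB, hC]
  · have hA : ε/2 * s1 ≤ ε/2 * (f - E) :=
      mul_le_mul_of_nonneg_left (by linarith) (by linarith)
    have hB : ε/2 * s2 ≤ ε/2 * f :=
      mul_le_mul_of_nonneg_left (by linarith) (by linarith)
    have hC : E * (1 - ε/2) ≤ 0 := mul_nonpos_of_nonneg_of_nonpos hE0 (by linarith)
    nlinarith [hA, hB, hC]

/-- if `Q` is a shift of `𝒯`-quasi-tilings with error density at most `ε/2`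
and every tile of `𝒯` is `(r,ε/2)`-invariant, then the `r`-exterior density of `Q`
is at most `ε`. -/
theorem stmt_12 {G : Type*} [Group G] [DecidableEq G]
    (gen : Finset G) (hgen : Subgroup.closure (gen : Set G) = ⊤)
    (𝒯 : Finset (Finset G)) (h1 : ∀ t ∈ 𝒯, (1 : G) ∈ t)
    (r : ℕ) (ε : ℝ) (hε : 0 < ε)
    (hinv : ∀ t ∈ 𝒯, ((bdry gen r (t : Set G)).ncard : ℝ) ≤ ε / 2 * t.card)
    (Q : Set (G → Finset G)) (hQT : ∀ T ∈ Q, IsQT 𝒯 T)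
    (hQinv : ∀ (g : G), ∀ T ∈ Q, (fun h => T (g⁻¹ * h)) ∈ Q)
    (δ : ℝ) (hδ : 0 < δ)
    (herr : ∀ T ∈ Q, ∀ F : Finset G, F.Nonempty → rho gen 1 F ≤ δ →
      ((errSet T F).ncard : ℝ) ≤ ε / 2 * F.card) :
    ∃ δ' > (0 : ℝ), ∀ T ∈ Q, ∀ F : Finset G, F.Nonempty → rho gen 1 F ≤ δ' →
      (((rExterior gen r T ∩ (F : Set G)).ncard : ℝ)) ≤ ε * F.card := by
  classical
  set B : Finset G := 𝒯.sup id with hB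
  obtain ⟨R, hR⟩ := finset_subset_ball gen hgen (B⁻¹ * B)
  set c : ℕ := (ball gen (3 * R)).card with hcdef
  have hc1 : 0 < c := Finset.card_pos.mpr ⟨1, one_mem_ball gen _⟩
  have hcR : (0:ℝ) < (c:ℝ) := by exact_mod_cast hc1
  set δ' : ℝ := min δ (min (1 / (c:ℝ)) (ε / (2 * (c:ℝ)))) with hδ'def
  have hδ'pos : 0 < δ' := by
    apply lt_min hδ
    apply lt_min
    · positivity
    · positivity
  have hδ'δ : δ' ≤ δ := min_le_left _ _
  have h1c : δ' ≤ 1 / (c:ℝ) := le_trans (min_le_right _ _) (min_le_left _ _)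
  have h2c : δ' ≤ ε / (2 * (c:ℝ)) := le_trans (min_le_right _ _) (min_le_right _ _)
  have hd1 : δ' * (c:ℝ) ≤ 1 := by
    have h := mul_le_mul_of_nonneg_right h1c hcR.le
    have h' : 1 / (c:ℝ) * (c:ℝ) = 1 := by field_simp
    linarith
  have hd2 : δ' * (c:ℝ) ≤ ε / 2 := by
    have h := mul_le_mul_of_nonneg_right h2c hcR.le
    have h' : ε / (2 * (c:ℝ)) * (c:ℝ) = ε / 2 := by field_simp
    linarith
  refine ⟨δ', hδ'pos, ?_⟩
  intro T hTQ F hFne hrho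
  have hFcard : (0:ℝ) < (F.card : ℝ) := by exact_mod_cast Finset.card_pos.mpr hFne
  -- error bound
  have herr' : ((errSet T F).ncard : ℝ) ≤ ε / 2 * F.card :=
    herr T hTQ F hFne (hrho.trans hδ'δ)
  -- boundary of F bound
  have hbd1 : ((bdry gen 1 ((F : Set G))).ncard : ℝ) ≤ δ' * F.card := by
    have h := hrho
    rw [rho, div_le_iff₀ hFcard] at h
    exact h
  -- definitions
  set tileF : G → Finset G := fun h => (T h).image (h * ·) with htileF
  have coe_tileF : ∀ h : G, ((tileF h : Finset G) : Set G) = h • ((T h : Finset G) : Set G) := by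
    intro h
    rw [htileF]
    ext x
    simp only [Finset.coe_image, Set.mem_image, Finset.mem_coe, Set.mem_smul_set, smul_eq_mul]
  set H : Finset G := (F * B⁻¹).filter (fun h => ∃ x ∈ T h, h * x ∈ F) with hHdef
  have hTh𝒯 : ∀ h ∈ H, T h ∈ 𝒯 := by
    intro h hh
    obtain ⟨-, x, hx, -⟩ := Finset.mem_filter.mp hh
    rcases (hQT T hTQ).1 h with h' | h'
    · exact h'
    · rw [h'] at hx; exact absurd hx (Finset.notMem_empty x)
  have hThB : ∀ h ∈ H, T h ⊆ B := by
    intro h hh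
    exact (Finset.le_sup (f := id) (hTh𝒯 h hh) : id (T h) ≤ B)
  set errFin : Finset G := F.filter (fun g => g ∉ tiles T) with herrFin
  have hcoeerr : (errFin : Set G) = errSet T F := by
    rw [herrFin, Finset.coe_filter]
    rfl
  set innF : G → Finset G :=
    fun h => (tileF h).filter (fun g => g ∈ bdry gen r (h • ((T h : Finset G) : Set G)))
    with hinnF
  -- main inclusion
  have hsub : rExterior gen r T ∩ (F : Set G) ⊆ ((errFin ∪ H.biUnion innF : Finset G) : Set G) := by
    rintro g ⟨hgext, hgF⟩
    rw [Finset.coe_union, Set.mem_union]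
    by_cases ht : g ∈ tiles T
    · right
      obtain ⟨h, hgh⟩ := Set.mem_iUnion.mp ht
      obtain ⟨y, hy, hyg⟩ := Set.mem_smul_set.mp hgh
      rw [smul_eq_mul] at hyg
      have hy' : y ∈ T h := Finset.mem_coe.mp hy
      have hTh : T h ∈ 𝒯 := by
        rcases (hQT T hTQ).1 h with h' | h'
        · exact h'
        · rw [h'] at hy'; exact absurd hy' (Finset.notMem_empty y)
      have hyB : y ∈ B := (Finset.le_sup (f := id) hTh : id (T h) ≤ B) hy'
      have hgF' : g ∈ F := Finset.mem_coe.mp hgF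
      have hH : h ∈ H := by
        rw [hHdef]
        refine Finset.mem_filter.mpr ⟨?_, y, hy', by rwa [hyg]⟩
        refine Finset.mem_mul.mpr ⟨g, hgF', y⁻¹, ?_, by rw [← hyg]; group⟩
        simpa using hyB
      have hbd : g ∈ bdry gen r (h • ((T h : Finset G) : Set G)) := by
        rw [rExterior, Set.mem_compl_iff] at hgext
        by_contra hnb
        exact hgext (Set.mem_iUnion.mpr ⟨h, hgh, hnb⟩)
      refine Finset.mem_coe.mpr (Finset.mem_biUnion.mpr ⟨h, hH, ?_⟩)
      rw [hinnF]
      refine Finset.mem_filter.mpr ⟨?_, hbd⟩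
      rw [htileF]
      exact Finset.mem_image.mpr ⟨y, hy', hyg⟩
    · left
      exact Finset.mem_coe.mpr (Finset.mem_filter.mpr ⟨Finset.mem_coe.mp hgF, ht⟩)
  -- counting: main set
  have hNle : (rExterior gen r T ∩ (F : Set G)).ncard ≤ errFin.card + ∑ h ∈ H, (innF h).card := by
    calc (rExterior gen r T ∩ (F : Set G)).ncard
        ≤ ((errFin ∪ H.biUnion innF : Finset G) : Set G).ncard :=
          Set.ncard_le_ncard hsub (Finset.finite_toSet _)
      _ = (errFin ∪ H.biUnion innF).card := Set.ncard_coe_finset _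
      _ ≤ errFin.card + (H.biUnion innF).card := Finset.card_union_le _ _
      _ ≤ errFin.card + ∑ h ∈ H, (innF h).card :=
          Nat.add_le_add_left Finset.card_biUnion_le _
  -- per-tile bound
  have hinn : ∀ h ∈ H, ((innF h).card : ℝ) ≤ ε / 2 * (T h).card := by
    intro h hh
    have h𝒯 := hTh𝒯 h hh
    have hfin : (h • ((T h : Finset G) : Set G)).Finite := by
      rw [← coe_tileF]; exact Finset.finite_toSet _
    have hss : ((innF h : Finset G) : Set G) ⊆ bdry gen r (h • ((T h : Finset G) : Set G)) := by
      intro x hx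
      exact (Finset.mem_filter.mp (Finset.mem_coe.mp hx)).2
    have h2 : (innF h).card ≤ (bdry gen r (h • ((T h : Finset G) : Set G))).ncard := by
      rw [← Set.ncard_coe_finset]
      exact Set.ncard_le_ncard hss (bdry_finite gen hfin r)
    have h3 : (bdry gen r (h • ((T h : Finset G) : Set G))).ncard
        = (bdry gen r ((T h : Finset G) : Set G)).ncard := by
      rw [bdry_smul, Set.ncard_smul_set]
    calc ((innF h).card : ℝ) ≤ ((bdry gen r ((T h : Finset G) : Set G)).ncard : ℝ) := by
          exact_mod_cast h2.trans_eq h3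
      _ ≤ ε / 2 * (T h).card := hinv _ h𝒯
  -- tiles union
  set S : Finset G := H.biUnion tileF with hSdef
  have hdisj : ∀ h ∈ H, ∀ h' ∈ H, h ≠ h' → Disjoint (tileF h) (tileF h') := by
    intro h _ h' _ hne
    rw [← Finset.disjoint_coe, coe_tileF, coe_tileF]
    exact (hQT T hTQ).2 h h' hne
  have hScard : S.card = ∑ h ∈ H, (T h).card := by
    rw [hSdef, Finset.card_biUnion hdisj]
    refine Finset.sum_congr rfl fun h _ => ?_
    rw [htileF]
    exact Finset.card_image_of_injective _ (mul_right_injective h)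
  have hsum : (∑ h ∈ H, ((innF h).card : ℝ)) ≤ ε / 2 * S.card := by
    calc (∑ h ∈ H, ((innF h).card : ℝ)) ≤ ∑ h ∈ H, ε / 2 * ((T h).card : ℝ) :=
          Finset.sum_le_sum hinn
      _ = ε / 2 * ∑ h ∈ H, ((T h).card : ℝ) := by rw [Finset.mul_sum]
      _ = ε / 2 * S.card := by rw [hScard]; push_cast; ring
  -- S inside F * ball R
  have hSsub : S ⊆ F * ball gen R := by
    intro x hx
    obtain ⟨h, hh, hxh⟩ := Finset.mem_biUnion.mp hx
    rw [htileF] at hxh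
    obtain ⟨y, hy, rfl⟩ := Finset.mem_image.mp hxh
    have hyB : y ∈ B := hThB h hh hy
    obtain ⟨hhFB, -⟩ := Finset.mem_filter.mp hh
    obtain ⟨f, hf, b, hb, rfl⟩ := Finset.mem_mul.mp hhFB
    have hby : b * y ∈ ball gen R := hR (Finset.mul_mem_mul hb hyB)
    have : f * b * y = f * (b * y) := by rw [mul_assoc]
    rw [this]
    exact Finset.mul_mem_mul hf hby
  have hStiles : ∀ x ∈ S, x ∈ tiles T := by
    intro x hx
    obtain ⟨h, hh, hxh⟩ := Finset.mem_biUnion.mp hx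
    exact Set.mem_iUnion.mpr ⟨h, by rw [← coe_tileF]; exact Finset.mem_coe.mpr hxh⟩
  -- split S
  have hsplit : S.card = (S ∩ F).card + (S \ F).card :=
    (Finset.card_inter_add_card_sdiff S F).symm
  have hs1 : (S ∩ F).card + errFin.card ≤ F.card := by
    have hdis : Disjoint (S ∩ F) errFin := by
      rw [Finset.disjoint_left]
      intro x hx hxe
      exact (Finset.mem_filter.mp hxe).2 (hStiles x (Finset.mem_inter.mp hx).1)
    calc (S ∩ F).card + errFin.card = ((S ∩ F) ∪ errFin).card :=
          (Finset.card_union_of_disjoint hdis).symm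
      _ ≤ F.card := Finset.card_le_card
          (Finset.union_subset Finset.inter_subset_right (Finset.filter_subset _ _))
  have hs2 : (S \ F).card ≤ (bdry gen 1 ((F : Finset G) : Set G)).ncard * c := by
    have hss : S \ F ⊆ (F * ball gen R) \ F := Finset.sdiff_subset_sdiff hSsub le_rfl
    have h2 : ((F * ball gen R) \ F).card ≤ (bdry gen R ((F : Finset G) : Set G)).ncard := by
      rw [← Set.ncard_coe_finset]
      refine Set.ncard_le_ncard ?_ (bdry_finite gen F.finite_toSet R)
      rw [Finset.coe_sdiff]
      exact mul_ball_sdiff_subset_bdry gen R F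
    calc (S \ F).card ≤ ((F * ball gen R) \ F).card := Finset.card_le_card hss
      _ ≤ (bdry gen R ((F : Finset G) : Set G)).ncard := h2
      _ ≤ (bdry gen 1 ((F : Finset G) : Set G)).ncard * c := ncard_bdry_le gen R F
  -- error card identification
  have herrcard : (errFin.card : ℝ) = ((errSet T F).ncard : ℝ) := by
    rw [← hcoeerr, Set.ncard_coe_finset]
  -- assemble over ℝ
  have hNR : ((rExterior gen r T ∩ (F : Set G)).ncard : ℝ)
      ≤ (errFin.card : ℝ) + ∑ h ∈ H, ((innF h).card : ℝ) := by
    have := hNle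
    push_cast
    exact_mod_cast this
  have hs1R : ((S ∩ F).card : ℝ) + (errFin.card : ℝ) ≤ (F.card : ℝ) := by exact_mod_cast hs1
  have hs2R : ((S \ F).card : ℝ) ≤ ((bdry gen 1 ((F : Finset G) : Set G)).ncard : ℝ) * c := by
    exact_mod_cast hs2
  have hsplitR : (S.card : ℝ) = ((S ∩ F).card : ℝ) + ((S \ F).card : ℝ) := by exact_mod_cast hsplit
  have hER : (errFin.card : ℝ) ≤ ε / 2 * F.card := by rw [herrcard]; exact herr'
  have hs2f : ((S \ F).card : ℝ) ≤ δ' * (c:ℝ) * F.card := by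
    calc ((S \ F).card : ℝ) ≤ ((bdry gen 1 ((F : Finset G) : Set G)).ncard : ℝ) * c := hs2R
      _ ≤ δ' * (F.card : ℝ) * c := mul_le_mul_of_nonneg_right hbd1 hcR.le
      _ = δ' * (c:ℝ) * F.card := by ring
  have hfinal : ((rExterior gen r T ∩ (F : Set G)).ncard : ℝ)
      ≤ (errFin.card : ℝ) + ε / 2 * ((S ∩ F).card + ((S \ F).card : ℝ)) := by
    calc ((rExterior gen r T ∩ (F : Set G)).ncard : ℝ)
        ≤ (errFin.card : ℝ) + ∑ h ∈ H, ((innF h).card : ℝ) := hNR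
      _ ≤ (errFin.card : ℝ) + ε / 2 * S.card := by linarith [hsum]
      _ = (errFin.card : ℝ) + ε / 2 * ((S ∩ F).card + ((S \ F).card : ℝ)) := by
          rw [hsplitR]
  set E : ℝ := (errFin.card : ℝ) with hE
  set s1 : ℝ := ((S ∩ F).card : ℝ) with hs1d
  set s2 : ℝ := ((S \ F).card : ℝ) with hs2d
  have hEnn : 0 ≤ E := Nat.cast_nonneg _
  have hs1nn : 0 ≤ s1 := Nat.cast_nonneg _
  have hs2nn : 0 ≤ s2 := Nat.cast_nonneg _
  clear_value tileF H errFin innF S E s1 s2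
  exact final_arith hfinal hs1R hs2f hER hd1 hd2 hFcard hε hEnn hs1nn hs2nn
end

section
/- If X is a shift of finite type defined by forbidden patterns on a ball B_R, and X^n → X in the space of shifts, then X^n ⊆ X for all sufficiently large n. -/
open Pointwise Filter

/-- let `X` be the SFT defined by forbidding the patterns `P` on the
ball `B = B_R`. If the shifts `Xₙ` converge to `X` (projections agree on every finite set
eventually), then `Xₙ ⊆ X` for all sufficiently large `n`. -/
theorem stmt_19 {G A : Type*} [Group G] [DecidableEq G]
    (gen : Finset G) (hgen : Subgroup.closure (gen : Set G) = ⊤)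
    (R : ℕ) (B : Finset G) (hB : B = ball gen R)
    (P : Set (B → A))
    (X : Set (G → A))
    (hX : X = {x : G → A | ∀ g : G, (fun k : B => x (g * (k : G))) ∉ P})
    (Xs : ℕ → Set (G → A))
    (hXsinv : ∀ n, ∀ (g : G), ∀ x ∈ Xs n, (fun h => x (g⁻¹ * h)) ∈ Xs n)
    (hconv : ∀ K : Finset G, ∀ᶠ n in atTop, proj (Xs n) K = proj X K) :
    ∀ᶠ n in atTop, Xs n ⊆ X := by
  filter_upwards [hconv B] with n hn x hx
  subst hX
  intro g hg
  have hy : (fun h => x (g⁻¹⁻¹ * h)) ∈ Xs n := hXsinv n g⁻¹ x hx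
  have hproj : (fun k : B => x (g⁻¹⁻¹ * (k : G))) ∈ proj (Xs n) B :=
    ⟨_, hy, fun k => rfl⟩
  rw [hn] at hproj
  obtain ⟨x', hx', hfk⟩ := hproj
  have := hx' 1
  apply this
  convert hg using 1
  funext k
  have := hfk k
  simp only [inv_inv] at this
  simp [← this]
end
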